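/- Assume hypothesis (H), and let a ≤ b < c ≤ d in [0,1] with m₀(θ) ≤ 0 for all θ ∈ [a,d]. Then for every t ∈ [0,T), x(t,b) ≤ x(t,c) e^{−Mt}, where M = A σ^{2/(γ+2)} ∫_b^c |m₀(θ)|^{γ/(γ+2)} dθ and A = (2/γ)^{γ/(γ+2)} (1/γ + 1/2). -/

import Mathlib

open Set

lemma young_ineq (γ σ m X : ℝ) (hγ : 0 < γ) (hσ : 0 < σ) (hm : 0 ≤ m) (hX : 0 < X) :
    γ * ((2/γ) ^ (γ/(γ+2)) * (1/γ + 1/2) * σ ^ (2/(γ+2)) * m ^ (γ/(γ+2)))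
      ≤ σ * X ^ γ + m / X ^ 2 := by
  have hγ2 : (0:ℝ) < γ + 2 := by linarith
  set e := γ/(γ+2) with he_def
  set f := 2/(γ+2) with hf_def
  have he : 0 < e := div_pos hγ hγ2
  have hf : 0 < f := div_pos two_pos hγ2
  have hef : f + e = 1 := by rw [he_def, hf_def]; field_simp; ring
  rcases eq_or_lt_of_le hm with h0 | hm'
  · rw [← h0, Real.zero_rpow (ne_of_gt he)]
    have h1 : 0 < σ * X ^ γ := mul_pos hσ (Real.rpow_pos_of_pos hX γ)
    have h2 : (0:ℝ) ≤ (0:ℝ)/X^2 := by positivity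
    nlinarith
  · have hXγ : 0 < X ^ γ := Real.rpow_pos_of_pos hX γ
    have hX2 : 0 < X ^ 2 := by positivity
    have hp₁ : 0 < σ * X ^ γ / f := by positivity
    have hp₂ : 0 < (m / X ^ 2) / e := by positivity
    have key := Real.geom_mean_le_arith_mean2_weighted hf.le he.le hp₁.le hp₂.le hef
    have hrhs : f * (σ * X ^ γ / f) + e * ((m / X ^ 2) / e) = σ * X ^ γ + m / X ^ 2 := by
      field_simp
    rw [hrhs] at key
    refine le_trans (le_of_eq ?_) key
    have hLpos : 0 < γ * ((2/γ) ^ e * (1/γ + 1/2) * σ ^ f * m ^ e) := by positivity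
    have hRpos : 0 < (σ * X ^ γ / f) ^ f * ((m / X ^ 2) / e) ^ e := by positivity
    apply Real.log_injOn_pos (mem_Ioi.2 hLpos) (mem_Ioi.2 hRpos)
    have l1 : Real.log (σ * X ^ γ / f) = Real.log σ + γ * Real.log X - Real.log f := by
      rw [Real.log_div (by positivity) (ne_of_gt hf), Real.log_mul hσ.ne' hXγ.ne',
        Real.log_rpow hX]
    have l2 : Real.log ((m / X ^ 2) / e) = Real.log m - 2 * Real.log X - Real.log e := by
      rw [Real.log_div (by positivity) (ne_of_gt he), Real.log_div hm'.ne' hX2.ne',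
        Real.log_pow]
      push_cast; ring
    have lf : Real.log f = Real.log 2 - Real.log (γ+2) := by
      rw [hf_def, Real.log_div two_ne_zero hγ2.ne']
    have le' : Real.log e = Real.log γ - Real.log (γ+2) := by
      rw [he_def, Real.log_div hγ.ne' hγ2.ne']
    have lmid : Real.log (1/γ + 1/2) = Real.log (γ+2) - (Real.log 2 + Real.log γ) := by
      have : (1/γ + 1/2 : ℝ) = (γ+2)/(2*γ) := by field_simp; ring
      rw [this, Real.log_div hγ2.ne' (by positivity), Real.log_mul two_ne_zero hγ.ne']
    have l2γ : Real.log ((2:ℝ)/γ) = Real.log 2 - Real.log γ :=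
      Real.log_div two_ne_zero hγ.ne'
    rw [Real.log_mul hγ.ne' (by positivity),
      Real.log_mul (by positivity) (ne_of_gt (Real.rpow_pos_of_pos hm' e)),
      Real.log_mul (by positivity) (ne_of_gt (Real.rpow_pos_of_pos hσ f)),
      Real.log_mul (by positivity) (by positivity : (1/γ+1/2:ℝ) ≠ 0),
      Real.log_rpow (by positivity), Real.log_rpow hσ, Real.log_rpow hm',
      Real.log_mul (ne_of_gt (Real.rpow_pos_of_pos hp₁ f)) (ne_of_gt (Real.rpow_pos_of_pos hp₂ e)),
      Real.log_rpow hp₁, Real.log_rpow hp₂, l1, l2, lf, le', lmid, l2γ, he_def, hf_def]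
    field_simp
    ring

/-- under hypothesis (H), if m₀ ≤ 0 on [a,d] and a ≤ b < c ≤ d, then
x(t,b) ≤ x(t,c) e^{-Mt} with M = A σ^{2/(γ+2)} ∫_b^c |m₀|^{γ/(γ+2)} and
A = (2/γ)^{γ/(γ+2)} (1/γ + 1/2). -/
theorem stmt_12
    -- hypothesis (H)
    (γ σ : ℝ) (hγ : 0 < γ) (hσ : 0 < σ)
    (T : EReal) (hT : 0 < T)
    (J : Set ℝ) (hJ : J = {t : ℝ | 0 ≤ t ∧ (t : EReal) < T})
    (m₀ : ℝ → ℝ) (hm₀cont : Continuous m₀) (hm₀per : ∀ θ : ℝ, m₀ (θ + 1) = m₀ θ)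
    (x y xθ : ℝ → ℝ → ℝ)
    (hxcont : ContinuousOn (fun p : ℝ × ℝ => x p.1 p.2) (J ×ˢ univ))
    (hycont : ContinuousOn (fun p : ℝ × ℝ => y p.1 p.2) (J ×ˢ univ))
    (hxper : ∀ t ∈ J, ∀ θ : ℝ, x t (θ + 1) = x t θ)
    (hyper : ∀ t ∈ J, ∀ θ : ℝ, y t (θ + 1) = y t θ)
    (hxθ : ∀ t ∈ J, ∀ θ : ℝ, HasDerivAt (x t) (xθ t θ) θ)
    (hyC1 : ∀ t ∈ J, ∀ θ : ℝ, DifferentiableAt ℝ (y t) θ)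
    (hxpos : ∀ t ∈ J, ∀ θ : ℝ, 0 < x t θ)
    (hy0 : ∀ θ : ℝ, y 0 θ = 0)
    (hyform : ∀ t ∈ J, ∀ θ : ℝ,
      y t θ = -γ * xθ t θ + σ * x t θ * ∫ τ in (0:ℝ)..t, x τ θ ^ γ)
    (hratio : ∀ θ : ℝ, ∀ t ∈ J,
      HasDerivWithinAt (fun s => y s θ / x s θ) (m₀ θ / x t θ ^ 2) J t)
    (hxint : ∀ t ∈ J, (∫ θ in (0:ℝ)..1, x t θ ^ γ) = 1)
    -- points a ≤ b < c ≤ d in [0,1] with m₀ ≤ 0 on [a,d]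
    (a b c d : ℝ) (ha : 0 ≤ a) (hab : a ≤ b) (hbc : b < c) (hcd : c ≤ d) (hd : d ≤ 1)
    (hm : ∀ θ ∈ Icc a d, m₀ θ ≤ 0) :
    ∀ t ∈ J, x t b ≤ x t c * Real.exp
      (-((2 / γ) ^ (γ / (γ + 2)) * (1 / γ + 1 / 2) * σ ^ (2 / (γ + 2))
          * (∫ θ in b..c, |m₀ θ| ^ (γ / (γ + 2))) * t)) := by
  intro t ht
  have ht' := ht
  rw [hJ] at ht'
  obtain ⟨ht0, htT⟩ := ht'
  set e := γ/(γ+2) with he_def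
  set C : ℝ := (2/γ) ^ e * (1/γ + 1/2) * σ ^ (2/(γ+2)) with hC_def
  -- [0,t] ⊆ J
  have hsubJ : Icc (0:ℝ) t ⊆ J := by
    intro s hs
    rw [hJ]
    exact ⟨hs.1, lt_of_le_of_lt (EReal.coe_le_coe_iff.2 hs.2) htT⟩
  -- continuity of slices
  have hxcτ : ∀ θ : ℝ, ContinuousOn (fun τ => x τ θ) J := by
    intro θ
    exact hxcont.comp (Continuous.continuousOn (continuous_id.prodMk continuous_const))
      (fun s hs => ⟨hs, mem_univ _⟩)
  have hycτ : ∀ θ : ℝ, ContinuousOn (fun τ => y τ θ) J := by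
    intro θ
    exact hycont.comp (Continuous.continuousOn (continuous_id.prodMk continuous_const))
      (fun s hs => ⟨hs, mem_univ _⟩)
  -- key integral representation of y/x
  have hv : ∀ θ : ℝ, y t θ / x t θ = ∫ τ in (0:ℝ)..t, m₀ θ / x τ θ ^ 2 := by
    intro θ
    have hcont : ContinuousOn (fun s => y s θ / x s θ) (Icc 0 t) :=
      ((hycτ θ).div (hxcτ θ) (fun s hs => (hxpos s hs θ).ne')).mono hsubJ
    have hder : ∀ τ ∈ Ioo (0:ℝ) t, HasDerivWithinAt (fun s => y s θ / x s θ)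
        (m₀ θ / x τ θ ^ 2) (Ioi τ) τ := by
      intro τ hτ
      have hτJ : τ ∈ J := hsubJ ⟨hτ.1.le, hτ.2.le⟩
      have hnhds : J ∈ nhds τ := by
        refine Filter.mem_of_superset (Ioo_mem_nhds hτ.1 hτ.2) ?_
        exact fun s hs => hsubJ ⟨hs.1.le, hs.2.le⟩
      exact ((hratio θ τ hτJ).hasDerivAt hnhds).hasDerivWithinAt
    have hint : IntervalIntegrable (fun τ => m₀ θ / x τ θ ^ 2) MeasureTheory.volume 0 t := by
      apply ContinuousOn.intervalIntegrable
      rw [uIcc_of_le ht0]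
      exact (continuousOn_const.div (((hxcτ θ).mono hsubJ).pow 2)
        (fun s hs => pow_ne_zero 2 (hxpos s (hsubJ hs) θ).ne'))
    have := intervalIntegral.integral_eq_sub_of_hasDeriv_right_of_le ht0 hcont hder hint
    rw [this, hy0 θ, zero_div, sub_zero]
  -- pointwise lower bound on θ-derivative of log x t
  have hKle : ∀ θ ∈ Icc b c, C * |m₀ θ| ^ e * t ≤ xθ t θ / x t θ := by
    intro θ hθ
    have hθad : θ ∈ Icc a d := ⟨le_trans hab hθ.1, le_trans hθ.2 hcd⟩
    have hm₀θ : m₀ θ ≤ 0 := hm θ hθad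
    have habs : |m₀ θ| = -m₀ θ := abs_of_nonpos hm₀θ
    -- integrands
    have hxint' : IntervalIntegrable (fun τ => x τ θ ^ γ) MeasureTheory.volume 0 t := by
      apply ContinuousOn.intervalIntegrable
      rw [uIcc_of_le ht0]
      exact ((hxcτ θ).mono hsubJ).rpow_const
        (fun s hs => Or.inl (hxpos s (hsubJ hs) θ).ne')
    have hmint : IntervalIntegrable (fun τ => m₀ θ / x τ θ ^ 2) MeasureTheory.volume 0 t := by
      apply ContinuousOn.intervalIntegrable
      rw [uIcc_of_le ht0]
      exact (continuousOn_const.div (((hxcτ θ).mono hsubJ).pow 2)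
        (fun s hs => pow_ne_zero 2 (hxpos s (hsubJ hs) θ).ne'))
    have hcomb : σ * (∫ τ in (0:ℝ)..t, x τ θ ^ γ) - y t θ / x t θ
        = ∫ τ in (0:ℝ)..t, (σ * x τ θ ^ γ - m₀ θ / x τ θ ^ 2) := by
      rw [hv θ, intervalIntegral.integral_sub (hxint'.const_mul σ) hmint,
        intervalIntegral.integral_const_mul]
    have hlow : γ * (C * |m₀ θ| ^ e) * t
        ≤ ∫ τ in (0:ℝ)..t, (σ * x τ θ ^ γ - m₀ θ / x τ θ ^ 2) := by
      have hmono := intervalIntegral.integral_mono_on ht0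
        (intervalIntegrable_const (c := γ * (C * |m₀ θ| ^ e)))
        (hxint'.const_mul σ |>.sub hmint)
        (fun τ hτ => by
          have hXpos := hxpos τ (hsubJ hτ) θ
          have := young_ineq γ σ (|m₀ θ|) (x τ θ) hγ hσ (abs_nonneg _) hXpos
          rw [hC_def, he_def]
          have heq : σ * x τ θ ^ γ - m₀ θ / x τ θ ^ 2
              = σ * x τ θ ^ γ + |m₀ θ| / x τ θ ^ 2 := by
            rw [habs]; ring
          rw [heq]
          calc γ * ((2/γ) ^ (γ/(γ+2)) * (1/γ + 1/2) * σ ^ (2/(γ+2)) * |m₀ θ| ^ (γ/(γ+2)))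
              ≤ σ * x τ θ ^ γ + |m₀ θ| / x τ θ ^ 2 := this)
      rw [intervalIntegral.integral_const, smul_eq_mul, sub_zero] at hmono
      calc γ * (C * |m₀ θ| ^ e) * t = t * (γ * (C * |m₀ θ| ^ e)) := by ring
        _ ≤ _ := hmono
    -- from hyform : xθ/x = (σF - y/x)/γ
    have hxtpos := hxpos t ht θ
    have hform := hyform t ht θ
    have hxθval : xθ t θ / x t θ
        = (σ * (∫ τ in (0:ℝ)..t, x τ θ ^ γ) - y t θ / x t θ) / γ := by
      field_simp
      nlinarith [hform]
    rw [hxθval, le_div_iff₀ hγ]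
    rw [← hcomb] at hlow
    nlinarith [hlow]
  -- define h θ = log x t θ - ∫_b^θ K
  set K : ℝ → ℝ := fun θ => C * |m₀ θ| ^ e * t with hK_def
  have he0 : 0 ≤ e := le_of_lt (div_pos hγ (by linarith))
  have hKcont : Continuous K :=
    (continuous_const.mul ((hm₀cont.abs).rpow_const (fun θ => Or.inr he0))).mul
      continuous_const
  set h : ℝ → ℝ := fun θ => Real.log (x t θ) - ∫ s in b..θ, K s with hh_def
  have hder : ∀ θ : ℝ, HasDerivAt h (xθ t θ / x t θ - K θ) θ := by
    intro θ
    have h1 : HasDerivAt (fun θ => Real.log (x t θ)) (xθ t θ / x t θ) θ :=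
      (hxθ t ht θ).log (hxpos t ht θ).ne'
    have h2 : HasDerivAt (fun θ => ∫ s in b..θ, K s) (K θ) θ :=
      intervalIntegral.integral_hasDerivAt_right (hKcont.intervalIntegrable _ _)
        hKcont.stronglyMeasurable.stronglyMeasurableAtFilter hKcont.continuousAt
    exact h1.sub h2
  have hmono : MonotoneOn h (Icc b c) := by
    apply monotoneOn_of_deriv_nonneg (convex_Icc b c)
    · exact fun θ _ => ((hder θ).differentiableAt).continuousAt.continuousWithinAt
    · exact fun θ _ => ((hder θ).differentiableAt).differentiableWithinAt
    · intro θ hθ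
      rw [interior_Icc] at hθ
      rw [(hder θ).deriv]
      have := hKle θ ⟨hθ.1.le, hθ.2.le⟩
      simp only [hK_def]
      linarith
  have hbc' := hmono (left_mem_Icc.2 hbc.le) (right_mem_Icc.2 hbc.le) hbc.le
  simp only [hh_def, intervalIntegral.integral_same, sub_zero] at hbc'
  have hKint : (∫ s in b..c, K s) = C * (∫ s in b..c, |m₀ s| ^ e) * t := by
    have : (∫ s in b..c, K s) = ∫ s in b..c, (C * t) * |m₀ s| ^ e :=
      intervalIntegral.integral_congr (fun s _ => by rw [hK_def]; ring)
    rw [this, intervalIntegral.integral_const_mul]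
    ring
  rw [hKint] at hbc'
  calc x t b = Real.exp (Real.log (x t b)) := (Real.exp_log (hxpos t ht b)).symm
    _ ≤ Real.exp (Real.log (x t c) - C * (∫ s in b..c, |m₀ s| ^ e) * t) :=
        Real.exp_le_exp.2 (by linarith)
    _ = x t c * Real.exp (-(C * (∫ θ in b..c, |m₀ θ| ^ e) * t)) := by
        rw [sub_eq_add_neg, Real.exp_add, Real.exp_log (hxpos t ht c)]
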